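/- Let f ∈ ℤ[X] be monic of degree 2g (g ≥ 1), all of whose roots in ℂ have absolute value q, and write a₁ for the coefficient of X^{2g−1} in f. If a₁ > g(2q − 1), then f(−q) = 0. -/

import Mathlib

open Polynomial

/-- AM-GM for multisets of nonneg reals: if the sum is at most `c * card`, the product
is at most `c ^ card`. -/
lemma multiset_prod_le_pow_of_sum_le (s : Multiset ℝ) (h0 : ∀ x ∈ s, 0 ≤ x)
    (c : ℝ) (hc : 0 ≤ c) (hsum : s.sum ≤ c * s.card) : s.prod ≤ c ^ s.card := by
  rcases Nat.eq_zero_or_pos s.card with h | h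
  · simp [Multiset.card_eq_zero.mp h]
  · set l := s.toList with hl
    have hlen : l.length = s.card := s.length_toList
    have hcoe : (l : Multiset ℝ) = s := s.coe_toList
    have hlpos : 0 < l.length := by omega
    have hz : ∀ i ∈ Finset.univ, 0 ≤ l.get i := by
      intro i _
      exact h0 _ (by rw [← hcoe]; exact List.get_mem l i)
    have key := Real.geom_mean_le_arith_mean_weighted Finset.univ
      (fun _ : Fin l.length => (l.length : ℝ)⁻¹) (fun i => l.get i)
      (fun i _ => by positivity) ?_ hz
    · have hprod : ∏ i : Fin l.length, l.get i = l.prod := by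
        simpa using Fin.prod_univ_get l
      have hsum' : ∑ i : Fin l.length, l.get i = l.sum := by
        simpa using Fin.sum_univ_get l
      rw [Real.finset_prod_rpow _ _ hz, hprod] at key
      have hr : ∑ i : Fin l.length, (l.length : ℝ)⁻¹ * l.get i
          = (l.length : ℝ)⁻¹ * l.sum := by
        rw [← Finset.mul_sum, hsum']
      rw [hr] at key
      have hls : l.sum = s.sum := by rw [← hcoe]; simp
      have hkey2 : (l.prod) ^ ((l.length : ℝ)⁻¹) ≤ c := by
        refine key.trans ?_
        rw [hls, hlen]
        rw [inv_mul_le_iff₀ (by positivity)]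
        calc s.sum ≤ c * s.card := hsum
          _ = (s.card : ℝ) * c := by ring
      have hpnn : (0:ℝ) ≤ l.prod :=
        List.prod_nonneg (fun x hx => h0 x (by rw [← hcoe]; exact hx))
      have : ((l.prod) ^ ((l.length : ℝ)⁻¹)) ^ l.length ≤ c ^ l.length :=
        pow_le_pow_left₀ (Real.rpow_nonneg hpnn _) hkey2 _
      rw [← Real.rpow_natCast ((l.prod) ^ ((l.length : ℝ)⁻¹)) l.length,
        ← Real.rpow_mul hpnn, inv_mul_cancel₀ (by positivity), Real.rpow_one] at this
      have hlp : l.prod = s.prod := by rw [← hcoe]; simp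
      rw [hlp, hlen] at this
      exact this
    · simp only [Finset.sum_const, Finset.card_univ, Fintype.card_fin, nsmul_eq_mul]
      exact mul_inv_cancel₀ (by positivity)

/-- If `f ∈ ℤ[X]` is monic of degree `2g`, all complex roots of `f` have
absolute value `q`, and the coefficient `a₁` of `X^(2g-1)` satisfies `a₁ > g(2q - 1)`,
then `f(-q) = 0`. -/
theorem weil_poly_large_a1_root_neg_q (q : ℕ) (hq : IsPrimePow q) (g : ℕ) (hg : 1 ≤ g)
    (f : Polynomial ℤ) (hmonic : f.Monic) (hdeg : f.natDegree = 2 * g)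
    (habs : ∀ z : ℂ, Polynomial.aeval z f = 0 → ‖z‖ = q)
    (ha : (g : ℤ) * (2 * q - 1) < f.coeff (2 * g - 1)) :
    f.eval (-(q : ℤ)) = 0 := by
  have hqpos : 0 < q := hq.pos
  set F : Polynomial ℂ := f.map (Int.castRingHom ℂ) with hF
  have hFm : F.Monic := hmonic.map _
  have hsplits : F.Splits := IsAlgClosed.splits F
  have hFdeg : F.natDegree = 2 * g := by rw [hF, hmonic.natDegree_map, hdeg]
  have hcard : Multiset.card F.roots = 2 * g := by
    rw [← hFdeg]
    exact (Polynomial.splits_iff_card_roots.mp hsplits)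
  -- roots: eval, aeval, abs
  have hroot : ∀ z ∈ F.roots, Polynomial.aeval z f = 0 := by
    intro z hz
    have := Polynomial.isRoot_of_mem_roots hz
    rwa [Polynomial.IsRoot, hF, Polynomial.eval_map, ← algebraMap_int_eq, ← Polynomial.aeval_def] at this
  have habs' : ∀ z ∈ F.roots, ‖z‖ = q := fun z hz => habs z (hroot z hz)
  -- the real factors
  set x : ℂ → ℝ := fun z => 2 * q + 2 * z.re with hx
  have hx0 : ∀ z ∈ F.roots, 0 ≤ x z := by
    intro z hz
    have h1 : |z.re| ≤ ‖z‖ := Complex.abs_re_le_norm z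
    rw [habs' z hz] at h1
    have := (abs_le.mp h1).1
    simp only [hx]
    linarith
  set P : ℝ := ((F.roots.map x).prod) with hP
  have hPnn : 0 ≤ P := Multiset.prod_nonneg (by
    intro a ha'
    obtain ⟨z, hz, rfl⟩ := Multiset.mem_map.mp ha'
    exact hx0 z hz)
  set E : ℤ := f.eval (-(q : ℤ)) with hE
  have hEF : ((E : ℤ) : ℂ) = F.eval (-(q : ℂ)) := by
    rw [hE, hF]
    rw [show (-(q:ℂ)) = (((-(q:ℤ)) : ℤ) : ℂ) by push_cast; ring]
    rw [Polynomial.eval_intCast_map]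
    norm_cast
  have hprodeval : F.eval (-(q : ℂ)) = (F.roots.map fun z => (-(q:ℂ)) - z).prod :=
    hsplits.eval_eq_prod_roots_of_monic hFm _
  -- key squared identity
  have hsq : ((E : ℂ)) ^ 2 = (q : ℂ) ^ (2 * g) * ((P : ℝ) : ℂ) := by
    have hconj : (starRingEnd ℂ) ((E : ℂ)) = (E : ℂ) := by
      simp
    have step1 : ((E : ℂ)) ^ 2 = (E : ℂ) * (starRingEnd ℂ) ((E : ℂ)) := by
      rw [hconj]; ring
    rw [step1, hEF, hprodeval, map_multiset_prod, Multiset.map_map,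
      ← Multiset.prod_map_mul]
    have : ∀ z ∈ F.roots,
        ((-(q:ℂ)) - z) * ((starRingEnd ℂ) ∘ fun z => (-(q:ℂ)) - z) z
          = (q : ℂ) * ((x z : ℝ) : ℂ) := by
      intro z hz
      have h1 : Complex.normSq z = (q:ℝ)^2 := by
        rw [← Complex.sq_norm, habs' z hz]
      have h2 : Complex.normSq (-(q:ℂ) - z) = (q:ℝ) * x z := by
        simp only [Complex.normSq_apply, Complex.sub_re, Complex.sub_im, Complex.neg_re,
          Complex.neg_im, Complex.natCast_re, Complex.natCast_im, hx] at h1 ⊢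
        nlinarith [h1]
      have hcomp : ((starRingEnd ℂ) ∘ fun z => (-(q:ℂ)) - z) z
          = (starRingEnd ℂ) ((-(q:ℂ)) - z) := rfl
      rw [hcomp, Complex.mul_conj, h2]
      push_cast
      ring
    rw [Multiset.map_congr rfl this]
    have split : (F.roots.map fun z => (q : ℂ) * ((x z : ℝ) : ℂ)).prod
        = (q : ℂ) ^ (2 * g) * (F.roots.map fun z => ((x z : ℝ) : ℂ)).prod := by
      rw [Multiset.prod_map_mul]
      congr 1
      simp [hcard]
    rw [split]
    congr 1
    rw [hP]
    show (Multiset.map (fun z => ((x z : ℝ) : ℂ)) F.roots).prod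
      = Complex.ofRealHom (Multiset.map x F.roots).prod
    rw [map_multiset_prod, Multiset.map_map]
    rfl
  -- integrality of P as a complex number
  have hint : IsIntegral ℤ ((P : ℝ) : ℂ) := by
    have hrepr : ((P : ℝ) : ℂ)
        = (F.roots.map fun z => algebraMap ℤ ℂ (2 * q) + z + (starRingEnd ℂ) z).prod := by
      rw [hP]
      show Complex.ofRealHom (Multiset.map x F.roots).prod = _
      rw [map_multiset_prod, Multiset.map_map]
      refine congrArg Multiset.prod (Multiset.map_congr rfl ?_)
      intro z hz
      simp only [Function.comp_apply, hx]
      rw [add_assoc, Complex.add_conj]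
      simp only [Complex.ofRealHom_eq_coe, algebraMap_int_eq, eq_intCast]
      push_cast
      ring
    have hmem : ((P : ℝ) : ℂ) ∈ integralClosure ℤ ℂ := by
      rw [hrepr]
      refine Subalgebra.multiset_prod_mem _ ?_
      intro c hc
      obtain ⟨z, hz, rfl⟩ := Multiset.mem_map.mp hc
      have hzint : IsIntegral ℤ z :=
        ⟨f, hmonic, by rw [← Polynomial.aeval_def]; exact hroot z hz⟩
      have hzconj : IsIntegral ℤ ((starRingEnd ℂ) z) :=
        IsIntegral.map ((starRingEnd ℂ).toIntAlgHom) hzint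
      exact add_mem (add_mem (Subalgebra.algebraMap_mem _ _) hzint) hzconj
    exact hmem
  -- rationality: get an integer n
  have hqR : (0:ℝ) < (q:ℝ) := by exact_mod_cast hqpos
  set r : ℚ := ((E^2 : ℤ) : ℚ) / ((q:ℚ))^(2*g) with hr
  have hrC : ((r : ℚ) : ℂ) = ((P : ℝ) : ℂ) := by
    have hqC : ((q:ℂ))^(2*g) ≠ 0 := pow_ne_zero _ (Nat.cast_ne_zero.mpr hqpos.ne')
    rw [hr]
    push_cast
    rw [div_eq_iff hqC]
    rw [hsq]
    ring
  have hrint : IsIntegral ℤ r := by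
    rw [← isIntegral_algebraMap_iff (A := ℚ) (B := ℂ) (algebraMap ℚ ℂ).injective]
    rw [show algebraMap ℚ ℂ r = ((r:ℚ):ℂ) from eq_ratCast _ r, hrC]
    exact hint
  obtain ⟨n, hn⟩ := IsIntegrallyClosed.isIntegral_iff.mp hrint
  have hnQ : (n : ℚ) = r := hn
  have hE2 : E^2 = (q:ℤ)^(2*g) * n := by
    have hq0 : ((q:ℚ))^(2*g) ≠ 0 := by positivity
    rw [hr, eq_div_iff hq0] at hnQ
    rw [mul_comm]
    exact_mod_cast hnQ.symm
  have hnR : (n : ℝ) = P := by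
    have : ((n:ℚ):ℂ) = ((P:ℝ):ℂ) := by rw [hnQ, hrC]
    have h2 : (((n:ℝ)):ℂ) = ((P:ℝ):ℂ) := by push_cast at this ⊢; exact this
    exact_mod_cast h2
  -- the sum of the factors
  have hsumroots : F.roots.sum = -((f.coeff (2*g-1) : ℤ) : ℂ) := by
    have h := hsplits.nextCoeff_eq_neg_sum_roots_of_monic hFm
    have hpos : 0 < F.natDegree := by omega
    rw [Polynomial.nextCoeff_of_natDegree_pos hpos, hFdeg] at h
    have hco : F.coeff (2*g-1) = ((f.coeff (2*g-1) : ℤ) : ℂ) := by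
      rw [hF, Polynomial.coeff_map, eq_intCast]
    rw [hco] at h
    linear_combination h
  have hresum : (F.roots.map Complex.re).sum = -((f.coeff (2*g-1) : ℤ) : ℝ) := by
    have := (Complex.reAddGroupHom.map_multiset_sum F.roots).symm
    rw [Complex.coe_reAddGroupHom] at this
    rw [this, hsumroots]
    simp
  have hS : (F.roots.map x).sum
      = 2*(q:ℝ)*(2*g) + 2 * (-((f.coeff (2*g-1) : ℤ) : ℝ)) := by
    have h1 : (F.roots.map x).sum
        = (F.roots.map (fun _ => (2*(q:ℝ)))).sum + (F.roots.map (fun z => 2*z.re)).sum := by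
      rw [← Multiset.sum_map_add]
    rw [h1]
    have h2 : (F.roots.map (fun _ => (2*(q:ℝ)))).sum = 2*(q:ℝ)*(2*g) := by
      rw [Multiset.map_const', Multiset.sum_replicate, hcard]
      push_cast; ring
    have h3 : (F.roots.map (fun z => 2*z.re)).sum = 2 * (F.roots.map Complex.re).sum := by
      rw [← Multiset.sum_map_mul_left]
    rw [h2, h3, hresum]
  -- bound: P < 1 by AM-GM
  have hgR : (1:ℝ) ≤ (g:ℝ) := by exact_mod_cast hg
  have haR : (g:ℝ) * (2*(q:ℝ) - 1) + 1 ≤ ((f.coeff (2*g-1) : ℤ) : ℝ) := by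
    have : (g : ℤ) * (2 * q - 1) + 1 ≤ f.coeff (2 * g - 1) := ha
    exact_mod_cast this
  have hP1 : P < 1 := by
    set c : ℝ := ((g:ℝ) - 1) / g with hc
    have hc0 : 0 ≤ c := by
      apply div_nonneg <;> linarith
    have hcards : (Multiset.card (F.roots.map x) : ℝ) = 2*g := by
      rw [Multiset.card_map, hcard]; push_cast; ring
    have hsumle : (F.roots.map x).sum ≤ c * (Multiset.card (F.roots.map x)) := by
      rw [hS, hcards, hc]
      have hgne : (g:ℝ) ≠ 0 := by linarith
      rw [div_mul_eq_mul_div, le_div_iff₀ (by linarith)]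
      nlinarith [haR]
    have := multiset_prod_le_pow_of_sum_le (F.roots.map x)
      (by intro a ha'
          obtain ⟨z, hz, rfl⟩ := Multiset.mem_map.mp ha'
          exact hx0 z hz) c hc0 hsumle
    rw [hP] at *
    refine lt_of_le_of_lt this ?_
    apply pow_lt_one₀ hc0
    · rw [hc, div_lt_one (by linarith)]; linarith
    · rw [Multiset.card_map, hcard]; omega
  have hn0 : n = 0 := by
    have h0 : (0:ℝ) ≤ (n:ℝ) := by rw [hnR]; exact hPnn
    have h1 : (n:ℝ) < 1 := by rw [hnR]; exact hP1
    have h3 : (0:ℤ) ≤ n := by exact_mod_cast h0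
    have h2 : n < 1 := by exact_mod_cast h1
    omega
  have : E ^ 2 = 0 := by rw [hE2, hn0, mul_zero]
  have := pow_eq_zero_iff (n := 2) (by norm_num) |>.mp this
  exact this
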